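/- Let ν be a real number with 1 < ν ≤ 3^{1/4} and let t ≥ 2 be an integer. Then β_ν(t) ≤ ⌊((ν−1)/(ν·p(t)))·√t⌋ + 1, where p(t) denotes the smallest prime divisor of t. -/
import Mathlib


/-- `β_ν(t)`: the number of positive divisors of `t` in the interval `[√t/ν, √t]`. -/
noncomputable def betaNu (ν : ℝ) (t : ℕ) : ℕ :=
  {d : ℕ | 0 < d ∧ d ∣ t ∧ Real.sqrt t / ν ≤ (d : ℝ) ∧ (d : ℝ) ≤ Real.sqrt t}.ncard

lemma betaNu_aux_nusq (ν : ℝ) (hν0 : 0 < ν) (hν2 : ν ≤ (3 : ℝ) ^ ((1 : ℝ)/4)) :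
    ν ^ 2 < 2 := by
  have h1 : ((3:ℝ) ^ ((1:ℝ)/4)) ^ 2 = 3 ^ ((1:ℝ)/2) := by
    rw [← Real.rpow_natCast ((3:ℝ) ^ ((1:ℝ)/4)) 2, ← Real.rpow_mul (by norm_num)]
    norm_num
  have h2 : (3:ℝ) ^ ((1:ℝ)/2) < 2 := by
    rw [← Real.sqrt_eq_rpow]
    rw [show (2:ℝ) = Real.sqrt 4 by
      rw [show (4:ℝ) = 2^2 by norm_num, Real.sqrt_sq (by norm_num)]]
    exact Real.sqrt_lt_sqrt (by norm_num) (by norm_num)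
  have h3 : (0:ℝ) ≤ (3:ℝ) ^ ((1:ℝ)/4) := Real.rpow_nonneg (by norm_num) _
  nlinarith

lemma betaNu_aux_gap (ν : ℝ) (hν0 : 0 < ν) (hνsq : ν ^ 2 < 2)
    (t : ℕ) (ht : 2 ≤ t) (a b : ℕ)
    (ha0 : 0 < a) (hat : a ∣ t) (ha1 : Real.sqrt t / ν ≤ (a : ℝ))
    (hb0 : 0 < b) (hbt : b ∣ t) (hb1 : Real.sqrt t / ν ≤ (b : ℝ))
    (hb2 : (b : ℝ) ≤ Real.sqrt t) (hab : a < b) :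
    a + t.minFac ≤ b := by
  have htR : (0:ℝ) < t := by exact_mod_cast (by omega : 0 < t)
  have hst : 0 < Real.sqrt t := Real.sqrt_pos.mpr htR
  set g := Nat.gcd a b with hg
  have hνa : Real.sqrt t ≤ ν * a := by rw [div_le_iff₀ hν0] at ha1; linarith
  have hνb : Real.sqrt t ≤ ν * b := by rw [div_le_iff₀ hν0] at hb1; linarith
  have hg1 : g ≠ 1 := by
    intro h1
    have hcop : Nat.Coprime a b := h1
    have hdvd : a * b ∣ t := hcop.mul_dvd_of_dvd_of_dvd hat hbt
    obtain ⟨q, hq⟩ := hdvd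
    have habR : (a:ℝ) * b < t := by
      have hlt : (a:ℝ) < Real.sqrt t := lt_of_lt_of_le (by exact_mod_cast hab) hb2
      nlinarith [Real.mul_self_sqrt htR.le]
    have hab1 : a * b < t := by exact_mod_cast habR
    have hq2 : 2 ≤ q := by
      rcases Nat.lt_or_ge q 2 with h | h
      · interval_cases q <;> omega
      · exact h
    have h2ab : 2 * (a * b) ≤ t := by
      calc 2 * (a * b) ≤ (a * b) * q := by nlinarith
        _ = t := hq.symm
    have h2abR : 2 * ((a:ℝ) * b) ≤ t := by exact_mod_cast h2ab
    have htle : (t:ℝ) ≤ (ν * a) * (ν * b) := by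
      nlinarith [Real.mul_self_sqrt htR.le, hst.le]
    have haR : (1:ℝ) ≤ a := by exact_mod_cast ha0
    have hbR : (1:ℝ) ≤ b := by exact_mod_cast hb0
    nlinarith [mul_pos (lt_of_lt_of_le one_pos haR) (lt_of_lt_of_le one_pos hbR)]
  have hg0 : 0 < g := Nat.gcd_pos_of_pos_left b ha0
  have hgt : g ∣ t := (Nat.gcd_dvd_left a b).trans hat
  have hpg : t.minFac ≤ g := Nat.minFac_le_of_dvd (by omega) hgt
  have hgsub : g ∣ b - a := Nat.dvd_sub (Nat.gcd_dvd_right a b) (Nat.gcd_dvd_left a b)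
  have hgle : g ≤ b - a := Nat.le_of_dvd (by omega) hgsub
  omega

lemma betaNu_aux_count (p : ℕ) (hp : 0 < p) (F : Finset ℕ) (hne : F.Nonempty)
    (hgap : ∀ a ∈ F, ∀ b ∈ F, a < b → a + p ≤ b) :
    F.card ≤ (F.max' hne - F.min' hne) / p + 1 := by
  set m := F.min' hne with hm
  set M := F.max' hne with hM
  have hmono : ∀ a ∈ F, ∀ b ∈ F, a < b → (a - m) / p < (b - m) / p := by
    intro a ha b hb hab
    have hga : a + p ≤ b := hgap a ha b hb hab
    have hma : m ≤ a := F.min'_le a ha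
    have h1 : (a - m) + p ≤ b - m := by omega
    calc (a - m) / p < (a - m) / p + 1 := Nat.lt_succ_self _
      _ = ((a - m) + p) / p := (Nat.add_div_right _ hp).symm
      _ ≤ (b - m) / p := Nat.div_le_div_right h1
  have hinj : Set.InjOn (fun d => (d - m) / p) F := by
    intro a ha b hb hfab
    rcases lt_trichotomy a b with h | h | h
    · exact absurd hfab (Nat.ne_of_lt (hmono a ha b hb h))
    · exact h
    · exact absurd hfab.symm (Nat.ne_of_lt (hmono b hb a ha h))
  have hsub2 : F.image (fun d => (d - m) / p) ⊆ Finset.range ((M - m) / p + 1) := by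
    intro x hx
    simp only [Finset.mem_image] at hx
    obtain ⟨d, hd, rfl⟩ := hx
    rw [Finset.mem_range, Nat.lt_succ_iff]
    exact Nat.div_le_div_right (by have := F.le_max' d hd; omega)
  calc F.card = (F.image (fun d => (d - m) / p)).card :=
        (Finset.card_image_of_injOn hinj).symm
    _ ≤ (Finset.range ((M - m) / p + 1)).card := Finset.card_le_card hsub2
    _ = (M - m) / p + 1 := Finset.card_range _

lemma betaNu_aux_final (ν : ℝ) (hν0 : 0 < ν) (hν1 : 1 < ν) (p : ℕ) (hp : 0 < p)
    (s : ℝ) (hs : 0 ≤ s) (m M : ℕ) (hmM : m ≤ M)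
    (hMle : (M : ℝ) ≤ s) (hmge : s ≤ ν * m) :
    (((M - m) / p : ℕ) : ℤ) ≤ ⌊(ν - 1) / (ν * (p : ℝ)) * s⌋ := by
  have hpR : (0:ℝ) < p := by exact_mod_cast hp
  rw [Int.le_floor]
  have hdiv : (((M - m) / p : ℕ) : ℝ) ≤ ((M:ℝ) - m) / p := by
    have h := Nat.cast_div_le (α := ℝ) (m := M - m) (n := p)
    rwa [Nat.cast_sub hmM] at h
  refine le_trans hdiv ?_
  rw [show (ν - 1) / (ν * (p:ℝ)) * s = ((ν - 1) * s) / (ν * p) by ring,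
    div_le_div_iff₀ hpR (by positivity)]
  have e1 := mul_le_mul_of_nonneg_left hMle (mul_nonneg hν0.le hpR.le)
  have e2 := mul_le_mul_of_nonneg_left hmge hpR.le
  linarith only [e1, e2]

/-- For `1 < ν ≤ 3^{1/4}` and `t ≥ 2`,
`β_ν(t) ≤ ⌊((ν−1)/(ν·p(t)))·√t⌋ + 1`, where `p(t)` is the least prime factor of `t`. -/
theorem stmt9 (ν : ℝ) (hν1 : 1 < ν) (hν2 : ν ≤ (3 : ℝ) ^ ((1 : ℝ)/4))
    (t : ℕ) (ht : 2 ≤ t) :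
    (betaNu ν t : ℤ) ≤ ⌊((ν - 1) / (ν * (t.minFac : ℝ))) * Real.sqrt t⌋ + 1 := by
  have hν0 : (0:ℝ) < ν := lt_trans one_pos hν1
  have ht0 : 0 < t := by omega
  have htR : (0:ℝ) < t := by exact_mod_cast ht0
  have hst : 0 < Real.sqrt t := Real.sqrt_pos.mpr htR
  have hpp : t.minFac.Prime := Nat.minFac_prime (by omega)
  have hp0 : 0 < t.minFac := hpp.pos
  have hpR : (0:ℝ) < (t.minFac : ℝ) := by exact_mod_cast hp0
  have hνsq : ν ^ 2 < 2 := betaNu_aux_nusq ν hν0 hν2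
  set S : Set ℕ :=
    {d : ℕ | 0 < d ∧ d ∣ t ∧ Real.sqrt t / ν ≤ (d : ℝ) ∧ (d : ℝ) ≤ Real.sqrt t} with hSdef
  have hsub : S ⊆ Set.Iic t := by
    rintro d ⟨hd0, hdt, -⟩
    exact Nat.le_of_dvd ht0 hdt
  have hfin : S.Finite := (Set.finite_Iic t).subset hsub
  have hbeta : betaNu ν t = hfin.toFinset.card := Set.ncard_eq_toFinset_card S hfin
  set F := hfin.toFinset with hF
  rcases F.eq_empty_or_nonempty with hFe | hne
  · rw [hbeta, hFe]
    simp only [Finset.card_empty, Nat.cast_zero]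
    have hx : (0:ℝ) ≤ (ν - 1) / (ν * (t.minFac : ℝ)) * Real.sqrt t :=
      mul_nonneg (div_nonneg (by linarith) (mul_pos hν0 hpR).le) hst.le
    have := Int.floor_nonneg.mpr hx
    omega
  · have hgap : ∀ a ∈ F, ∀ b ∈ F, a < b → a + t.minFac ≤ b := by
      intro a ha b hb hab
      have haS : a ∈ S := hfin.mem_toFinset.mp ha
      have hbS : b ∈ S := hfin.mem_toFinset.mp hb
      exact betaNu_aux_gap ν hν0 hνsq t ht a b haS.1 haS.2.1 haS.2.2.1
        hbS.1 hbS.2.1 hbS.2.2.1 hbS.2.2.2 hab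
    have hcard := betaNu_aux_count t.minFac hp0 F hne hgap
    set m := F.min' hne with hm
    set M := F.max' hne with hM
    have hmS : m ∈ S := hfin.mem_toFinset.mp (F.min'_mem hne)
    have hMS : M ∈ S := hfin.mem_toFinset.mp (F.max'_mem hne)
    have hmM : m ≤ M := F.min'_le M (F.max'_mem hne)
    have hmge : Real.sqrt t ≤ ν * m := by
      have h := hmS.2.2.1; rw [div_le_iff₀ hν0] at h; linarith
    have hfloor := betaNu_aux_final ν hν0 hν1 t.minFac hp0 (Real.sqrt t) hst.le
      m M hmM hMS.2.2.2 hmge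
    rw [hbeta]
    have hc : (F.card : ℤ) ≤ (((M - m) / t.minFac : ℕ) : ℤ) + 1 := by exact_mod_cast hcard
    omega
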